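/- Invariance of the ultradiscrete QRT map: let α₀₀, α₀₁, α₀₂, α₁₀, α₁₂, α₂₀, α₂₁, α₂₂ be real parameters, and define F₁(y) = max(α₂₀+2y, α₂₁+y, α₂₂), F₃(y) = max(α₀₀+2y, α₀₁+y, α₀₂), G₁(x) = max(α₀₂+2x, α₁₂+x, α₂₂), G₃(x) = max(α₀₀+2x, α₁₀+x, α₂₀). Then the ultradiscrete QRT map (x,y) ↦ (x̄, ȳ) given by x̄ = F₁(y) − F₃(y) − x and ȳ = G₁(x̄) − G₃(x̄) − y preserves the function K(x,y) := max(α₀₀+2x+2y, α₀₁+2x+y, α₀₂+2x, α₁₀+x+2y, α₁₂+x, α₂₀+2y, α₂₁+y, α₂₂) − x − y; that is, K(x̄, ȳ) = K(x,y) for all (x,y) ∈ ℝ². Consequently the curves Σ_κ : κ + x + y = F(α_{−∞}; x, y) form a one-parameter family of invariant curves of the map. -/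
import Mathlib


namespace Stmt12

variable (a00 a01 a02 a10 a12 a20 a21 a22 : ℝ)

/-- `F₁(y) = max(α₂₀+2y, α₂₁+y, α₂₂)`. -/
noncomputable def F1 (y : ℝ) : ℝ := max (a20 + 2 * y) (max (a21 + y) a22)

/-- `F₃(y) = max(α₀₀+2y, α₀₁+y, α₀₂)`. -/
noncomputable def F3 (y : ℝ) : ℝ := max (a00 + 2 * y) (max (a01 + y) a02)

/-- `G₁(x) = max(α₀₂+2x, α₁₂+x, α₂₂)`. -/
noncomputable def G1 (x : ℝ) : ℝ := max (a02 + 2 * x) (max (a12 + x) a22)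

/-- `G₃(x) = max(α₀₀+2x, α₁₀+x, α₂₀)`. -/
noncomputable def G3 (x : ℝ) : ℝ := max (a00 + 2 * x) (max (a10 + x) a20)

/-- The invariant of the ultradiscrete QRT map:
`K(x,y) = F(α₋∞; x, y) − x − y` where `F(α₋∞; x, y)` is the tropical
biquadratic polynomial with `α₁₁ = −∞`. -/
noncomputable def K (x y : ℝ) : ℝ :=
  max (a00 + 2 * x + 2 * y) (max (a01 + 2 * x + y) (max (a02 + 2 * x)
    (max (a10 + x + 2 * y) (max (a12 + x) (max (a20 + 2 * y)
      (max (a21 + y) a22)))))) - x - y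


lemma key (p q r u v : ℝ) (h : u + v = r - p) :
    max (2 * u + p) (max (u + q) r) - u = max (2 * v + p) (max (v + q) r) - v := by
  rw [← max_sub_sub_right, ← max_sub_sub_right, ← max_sub_sub_right, ← max_sub_sub_right]
  have e1 : 2 * u + p - u = r - v := by linarith
  have e2 : u + q - u = q := by ring
  have e3 : r - u = v + p := by linarith
  have e4 : 2 * v + p - v = v + p := by ring
  have e5 : v + q - v = q := by ring
  rw [e1, e2, e3, e4, e5, max_left_comm, max_left_comm (v + p), max_comm (r - v)]

lemma Krw (x y : ℝ) : K a00 a01 a02 a10 a12 a20 a21 a22 x y =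
    max (2 * x + F3 a00 a01 a02 y) (max (x + max (a10 + 2 * y) a12)
      (F1 a20 a21 a22 y)) - x - y := by
  unfold K F1 F3
  congr 2
  simp only [← max_add_add_left]
  ring_nf
  ac_rfl

lemma Krw2 (x y : ℝ) : K a00 a01 a02 a10 a12 a20 a21 a22 x y =
    max (2 * y + G3 a00 a10 a20 x) (max (y + max (a01 + 2 * x) a21)
      (G1 a02 a12 a22 x)) - y - x := by
  unfold K G1 G3
  rw [sub_sub, sub_sub, add_comm x y]
  congr 1
  simp only [← max_add_add_left]
  ring_nf
  ac_rfl

lemma lemA (x y : ℝ) :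
    K a00 a01 a02 a10 a12 a20 a21 a22 (F1 a20 a21 a22 y - F3 a00 a01 a02 y - x) y
      = K a00 a01 a02 a10 a12 a20 a21 a22 x y := by
  rw [Krw, Krw]
  have := key (F3 a00 a01 a02 y) (max (a10 + 2 * y) a12) (F1 a20 a21 a22 y)
    (F1 a20 a21 a22 y - F3 a00 a01 a02 y - x) x (by ring)
  linarith

lemma lemB (x y : ℝ) :
    K a00 a01 a02 a10 a12 a20 a21 a22 x (G1 a02 a12 a22 x - G3 a00 a10 a20 x - y)
      = K a00 a01 a02 a10 a12 a20 a21 a22 x y := by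
  rw [Krw2, Krw2]
  have := key (G3 a00 a10 a20 x) (max (a01 + 2 * x) a21) (G1 a02 a12 a22 x)
    (G1 a02 a12 a22 x - G3 a00 a10 a20 x - y) y (by ring)
  linarith

/-- The ultradiscrete QRT map `x̄ = F₁(y) − F₃(y) − x`, `ȳ = G₁(x̄) − G₃(x̄) − y`
preserves `K`; consequently the curves `Σ_κ : κ + x + y = F(α₋∞; x, y)` form a
one-parameter family of invariant curves. -/
theorem uQRT_preserves_K (x y : ℝ) :
    K a00 a01 a02 a10 a12 a20 a21 a22
        (F1 a20 a21 a22 y - F3 a00 a01 a02 y - x)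
        (G1 a02 a12 a22 (F1 a20 a21 a22 y - F3 a00 a01 a02 y - x) -
          G3 a00 a10 a20 (F1 a20 a21 a22 y - F3 a00 a01 a02 y - x) - y) =
      K a00 a01 a02 a10 a12 a20 a21 a22 x y := by
  rw [lemB, lemA]

end Stmt12
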